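/- Let V be a finite-dimensional real vector space of odd dimension, let L be a one-dimensional real vector space, and let B : V → V → L be a symmetric bilinear map that is nondegenerate (its radical is zero). Then there exists a unique ray of L with the following property: for every linear functional φ : L → ℝ that takes positive values on that ray, there is a linear subspace W of V with 2 · dim W > dim V on which the real symmetric bilinear form (v, w) ↦ φ(B v w) is positive definite. -/

import Mathlib

open Module Finset

/-- Positivity transfers along rays. -/
lemma ray_pos_aux {L : Type*} [AddCommGroup L] [Module ℝ L]
    {x y : L} (hx : x ≠ 0) (hy : y ≠ 0) (h : SameRay ℝ x y)
    (ψ : L →ₗ[ℝ] ℝ) (hψ : 0 < ψ y) : 0 < ψ x := by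
  obtain ⟨p, q, hp, hq, hpq⟩ := h.exists_pos hx hy
  have h1 : p * ψ x = q * ψ y := by
    have := congrArg ψ hpq
    simpa [map_smul, smul_eq_mul] using this
  nlinarith [mul_pos hq hψ]

lemma sameRay_smul_smul_aux {L : Type*} [AddCommGroup L] [Module ℝ L]
    (u : L) {a b : ℝ} (hab : 0 < a * b) : SameRay ℝ (a • u) (b • u) := by
  have ha : a ≠ 0 := fun h => by simp [h] at hab
  refine Or.inr (Or.inr ⟨b * a⁻¹, 1, ?_, one_pos, ?_⟩)
  · have ha2 : 0 < a * a := by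
      rcases ha.lt_or_gt with h | h
      · nlinarith
      · nlinarith
    have : b * a⁻¹ = (a * b) * (a * a)⁻¹ := by field_simp
    rw [this]
    exact mul_pos hab (inv_pos.2 ha2)
  · rw [smul_smul, one_smul]
    congr 1
    field_simp

/-- Span of positive-diagonal orthogonal basis vectors is positive definite. -/
lemma posdef_span_aux {V : Type*} [AddCommGroup V] [Module ℝ V]
    (F : V →ₗ[ℝ] V →ₗ[ℝ] ℝ) {n : ℕ} (b : Basis (Fin n) ℝ V)
    (horth : ∀ i j : Fin n, i ≠ j → F (b i) (b j) = 0) :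
    ∃ W : Submodule ℝ V,
      Module.finrank ℝ W = (Finset.univ.filter fun i => 0 < F (b i) (b i)).card ∧
      ∀ w ∈ W, w ≠ 0 → 0 < F w w := by
  classical
  set P := Finset.univ.filter fun i => 0 < F (b i) (b i) with hP
  set v : {i // i ∈ P} → V := fun i => b i with hv
  have hli : LinearIndependent ℝ v :=
    b.linearIndependent.comp _ Subtype.val_injective
  refine ⟨Submodule.span ℝ (Set.range v), ?_, ?_⟩
  · rw [finrank_span_eq_card hli, Fintype.card_coe]
  · intro w hw hw0
    obtain ⟨c, hc⟩ := Finsupp.mem_span_range_iff_exists_finsupp.1 hw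
    set t := c.support with ht
    have hw' : w = ∑ i ∈ t, c i • v i := by rw [← hc]; rfl
    have hdd : ∀ i : {i // i ∈ P}, 0 < F (v i) (v i) := by
      intro i
      exact (Finset.mem_filter.1 i.2).2
    have hFw : F w w = ∑ i ∈ t, ∑ j ∈ t, c i * (c j * F (v j) (v i)) := by
      conv_lhs => rw [hw']
      simp only [map_sum, map_smul, LinearMap.sum_apply, LinearMap.smul_apply,
        smul_eq_mul, Finset.mul_sum]
    have hFw2 : F w w = ∑ i ∈ t, c i * c i * F (v i) (v i) := by
      rw [hFw]
      refine Finset.sum_congr rfl fun i hi => ?_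
      rw [Finset.sum_eq_single_of_mem i hi]
      · ring
      · intro j hj hji
        have : (j : Fin n) ≠ (i : Fin n) := fun h => hji (Subtype.ext h)
        rw [horth _ _ this]
        ring
    rw [hFw2]
    have hc0 : c ≠ 0 := by
      rintro rfl
      simp at hw'
      exact hw0 hw'
    obtain ⟨i, hi⟩ := Finsupp.ne_iff.1 hc0
    simp only [Finsupp.coe_zero, Pi.zero_apply] at hi
    refine Finset.sum_pos' (fun j _ => ?_) ⟨i, Finsupp.mem_support_iff.2 hi, ?_⟩
    · exact mul_nonneg (mul_self_nonneg _) (le_of_lt (hdd j))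
    · exact mul_pos (mul_self_pos.2 hi) (hdd i)


set_option maxHeartbeats 1000000 in
/-- Let `V` be a finite-dimensional real vector space of odd
dimension, `L` a one-dimensional real vector space, and `B : V → V → L` a
symmetric bilinear map whose radical is zero.  Then there is a unique ray of
`L` such that every linear functional `φ : L → ℝ` positive on that ray makes
`(v, w) ↦ φ (B v w)` positive definite on some subspace `W` of `V` with
`2 * dim W > dim V`. -/
theorem stmt0
    (V L : Type*) [AddCommGroup V] [Module ℝ V] [FiniteDimensional ℝ V]
    [AddCommGroup L] [Module ℝ L]
    (hV : Odd (Module.finrank ℝ V))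
    (hL : Module.finrank ℝ L = 1)
    (B : V →ₗ[ℝ] V →ₗ[ℝ] L)
    (hsymm : ∀ v w : V, B v w = B w v)
    (hnondeg : ∀ v : V, B v = 0 → v = 0) :
    ∃! r : Module.Ray ℝ L,
      ∀ φ : L →ₗ[ℝ] ℝ,
        (∀ (x : L) (hx : x ≠ 0), rayOfNeZero ℝ x hx = r → 0 < φ x) →
        ∃ W : Submodule ℝ V,
          2 * Module.finrank ℝ W > Module.finrank ℝ V ∧
          ∀ w ∈ W, w ≠ 0 → 0 < φ (B w w) := by
  classical
  have hLfin : FiniteDimensional ℝ L :=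
    FiniteDimensional.of_finrank_pos (by rw [hL]; norm_num)
  have e : L ≃ₗ[ℝ] ℝ := LinearEquiv.ofFinrankEq L ℝ (by rw [hL, Module.finrank_self])
  set n := Module.finrank ℝ V with hn
  set F : V →ₗ[ℝ] V →ₗ[ℝ] ℝ := B.compr₂ (e : L →ₗ[ℝ] ℝ) with hF
  have hFapp : ∀ v w : V, F v w = e (B v w) := fun _ _ => rfl
  have hFsymm : F.IsSymm := by
    refine ⟨fun v w => ?_⟩
    simp only [RingHom.id_apply, hFapp, hsymm]
  obtain ⟨b, hb⟩ := LinearMap.BilinForm.exists_orthogonal_basis hFsymm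
  have horth : ∀ i j : Fin n, i ≠ j → F (b i) (b j) = 0 := fun _ _ hij => hb hij
  have hd0 : ∀ i, F (b i) (b i) ≠ 0 := by
    intro i h
    have hFz : F (b i) = 0 := by
      apply b.ext
      intro j
      by_cases hij : i = j
      · subst hij; simpa using h
      · simpa using horth i j hij
    have hBz : B (b i) = 0 := by
      ext w
      have : e (B (b i) w) = 0 := by rw [← hFapp, hFz]; rfl
      simpa using e.injective (by simpa using this)
    exact b.ne_zero i (hnondeg _ hBz)
  -- counting
  have hPN : (Finset.univ.filter fun i => 0 < F (b i) (b i)).card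
      + (Finset.univ.filter fun i => 0 < -F (b i) (b i)).card = n := by
    have hcong : (Finset.univ.filter fun i => 0 < -F (b i) (b i))
        = Finset.univ.filter fun i => ¬ 0 < F (b i) (b i) := by
      refine Finset.filter_congr fun i _ => ?_
      constructor
      · intro h; exact not_lt.2 (le_of_lt (neg_pos.1 h))
      · intro h; exact neg_pos.2 ((not_lt.1 h).lt_of_ne (hd0 i))
    rw [hcong, Finset.card_filter_add_card_filter_not, Finset.card_univ,
      Fintype.card_fin]
  obtain ⟨s, hs1, hs2⟩ : ∃ s : ℝ, (s = 1 ∨ s = -1) ∧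
      2 * (Finset.univ.filter fun i => 0 < s * F (b i) (b i)).card > n := by
    obtain ⟨k, hk⟩ := hV
    rcases lt_or_ge (Finset.univ.filter fun i => 0 < -F (b i) (b i)).card
        (Finset.univ.filter fun i => 0 < F (b i) (b i)).card with h | h
    · exact ⟨1, Or.inl rfl, by simp only [one_mul]; omega⟩
    · refine ⟨-1, Or.inr rfl, ?_⟩
      have : (Finset.univ.filter fun i => 0 < (-1 : ℝ) * F (b i) (b i))
          = Finset.univ.filter fun i => 0 < -F (b i) (b i) := by
        refine Finset.filter_congr fun i _ => by rw [neg_one_mul]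
      rw [this]; omega
  have hs0 : s ≠ 0 := by rcases hs1 with rfl | rfl <;> norm_num
  have hss : s * s = 1 := by rcases hs1 with rfl | rfl <;> norm_num
  -- positive definite subspace for s • F
  obtain ⟨W, hWrank, hWpos⟩ := posdef_span_aux (s • F) b
    (fun i j hij => by simp [horth i j hij])
  have hWcard : 2 * Module.finrank ℝ W > n := by
    have hWrank' : Module.finrank ℝ W
        = (Finset.univ.filter fun i => 0 < s * F (b i) (b i)).card := by
      rw [hWrank]
      congr 1
    rw [hWrank']
    exact hs2
  have hWpos' : ∀ w ∈ W, w ≠ 0 → 0 < s * F w w := by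
    intro w hw hw0
    simpa using hWpos w hw hw0
  -- the ray
  set u : L := e.symm 1 with hu
  have hu0 : u ≠ 0 := by
    simp only [hu, ne_eq, EmbeddingLike.map_eq_zero_iff]
    norm_num
  set x₀ : L := s • u with hx₀def
  have hx₀ : x₀ ≠ 0 := smul_ne_zero hs0 hu0
  have hex₀ : e x₀ = s := by simp [hx₀def, hu]
  have hyrep : ∀ y : L, y = e y • u := by
    intro y
    rw [hu, ← map_smul, smul_eq_mul, mul_one, e.symm_apply_apply]
  refine ⟨rayOfNeZero ℝ x₀ hx₀, ?_, ?_⟩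
  · intro φ hφ
    have hφx₀ : 0 < φ x₀ := hφ x₀ hx₀ rfl
    have hφu : φ u = s * φ x₀ := by
      have : φ x₀ = s * φ u := by rw [hx₀def, map_smul, smul_eq_mul]
      rw [this, ← mul_assoc, hss, one_mul]
    have hrep : ∀ y : L, φ y = e y * (s * φ x₀) := by
      intro y
      conv_lhs => rw [hyrep y]
      rw [map_smul, smul_eq_mul, hφu]
    refine ⟨W, hWcard, ?_⟩
    intro w hw hw0
    have : φ (B w w) = (s * F w w) * φ x₀ := by
      rw [hrep (B w w), ← hFapp w w]; ring
    rw [this]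
    exact mul_pos (hWpos' w hw hw0) hφx₀
  · intro r' hr'
    by_contra hne
    have hx₀' : (-x₀ : L) ≠ 0 := neg_ne_zero.2 hx₀
    have hr'' : r' = rayOfNeZero ℝ (-x₀) hx₀' := by
      induction r' using Module.Ray.ind with
      | h y hy =>
        have hey : e y ≠ 0 := by
          intro h
          apply hy
          rw [hyrep y, h, zero_smul]
        rcases lt_or_ge 0 (e y * s) with hpos | hneg
        · exfalso
          apply hne
          rw [ray_eq_iff]
          conv_lhs => rw [hyrep y]
          rw [hx₀def]
          exact sameRay_smul_smul_aux u hpos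
        · have hne0 : e y * s ≠ 0 := mul_ne_zero hey hs0
          have hlt : e y * s < 0 := lt_of_le_of_ne hneg hne0
          have hneg' : 0 < e y * (-s) := by nlinarith
          rw [ray_eq_iff]
          have : -x₀ = (-s) • u := by rw [hx₀def, neg_smul]
          rw [this]
          conv_lhs => rw [hyrep y]
          exact sameRay_smul_smul_aux u hneg'
    -- apply property of r' with φ' = (-s) • e
    set φ' : L →ₗ[ℝ] ℝ := (-s) • (e : L →ₗ[ℝ] ℝ) with hφ'
    have hφ'x : 0 < φ' (-x₀) := by
      have hr : φ' (-x₀) = -s * e (-x₀) := rfl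
      rw [hr, map_neg, hex₀]
      nlinarith
    obtain ⟨W', hW'card, hW'pos⟩ := hr' φ' (by
      intro x hx hxr
      rw [hr''] at hxr
      exact ray_pos_aux hx hx₀' ((ray_eq_iff hx hx₀').1 hxr) φ' hφ'x)
    have hW'neg : ∀ w ∈ W', w ≠ 0 → 0 < -s * F w w := by
      intro w hw hw0
      have h := hW'pos w hw hw0
      have hr : φ' (B w w) = -s * F w w := rfl
      rw [hr] at h
      exact h
    have hdisj : W ⊓ W' = ⊥ := by
      rw [Submodule.eq_bot_iff]
      intro w hw
      by_contra hw0
      have h1 := hWpos' w (Submodule.mem_inf.1 hw).1 hw0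
      have h2 := hW'neg w (Submodule.mem_inf.1 hw).2 hw0
      nlinarith
    have hsum := Submodule.finrank_sup_add_finrank_inf_eq W W'
    rw [hdisj, finrank_bot, add_zero] at hsum
    have hle : Module.finrank ℝ ↥(W ⊔ W') ≤ n := Submodule.finrank_le _
    omega
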